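/- Consider the decomposition of the criss-cross cycle cost into the two matchings μ̃₁ = π̃∘σ̃⁻¹ and μ̃₂ = π̃∘τ⁻¹∘σ̃⁻¹, with matching cost E[m(μ)] = Σ_{i=1}^N (r_i − b_{μ(i)})² for uniform order statistics. If N is odd, then E[E[m(μ̃₁)]] = E[E[m(μ̃₂)]] = (N² + 4N − 3) / (3(N+1)²). If N is even, then the matching with two fixed points has average cost (N² + 4N − 6) / (3(N+1)²) while the matching with no fixed points has average cost (N² + 4N) / (3(N+1)²). -/

import Mathlib

/-- The criss-cross permutation σ̃ of {1,…,N}, written 0-indexed: position `i`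
(1-indexed `i+1`) is sent to `2*i` when `2*i < N` (1-indexed: `σ̃(j)=2j-1` for
`j ≤ (N+1)/2`) and to `2*(N-1-i)+1` otherwise (1-indexed: `σ̃(j)=2N-2j+2` for
`j > (N+1)/2`). -/
noncomputable def sigmaTilde (N : ℕ) : Equiv.Perm (Fin N) :=
  Equiv.ofBijective
    (fun i => if h : 2 * i.val < N then ⟨2 * i.val, h⟩
      else ⟨2 * (N - 1 - i.val) + 1, by have := i.isLt; omega⟩)
    (Finite.injective_iff_bijective.mp (by
      intro a b hab
      have ha := a.isLt; have hb := b.isLt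
      by_cases h1 : 2 * a.val < N <;> by_cases h2 : 2 * b.val < N <;>
        simp only [h1, h2, dif_pos, dif_neg, not_false_iff, Fin.mk.injEq, Fin.ext_iff] at hab ⊢ <;>
        omega))

/-- The criss-cross permutation π̃ = σ̃ ∘ I, where `I = Fin.revPerm` is the inversion
`I(j) = N+1-j` (0-indexed: `i ↦ N-1-i`).  Here `(f * g) i = f (g i)`. -/
noncomputable def piTilde (N : ℕ) : Equiv.Perm (Fin N) := sigmaTilde N * Fin.revPerm

open MeasureTheory

open Finset

/-- 0-indexed criss-cross map on values. -/
def sfun (N v : ℕ) : ℕ := if 2*v < N then 2*v else 2*(N-1-v)+1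

lemma sumA (m : ℕ) : ∑ k ∈ Finset.range m, (2*(k:ℝ)+1)*(2*(k:ℝ)+2)
    = (4*(m:ℝ)^3+3*m^2-m)/3 := by
  induction m with
  | zero => simp
  | succ n ih => rw [Finset.sum_range_succ, ih]; push_cast; ring

lemma sumB (m : ℕ) : ∑ k ∈ Finset.range m, (2*(k:ℝ)+2)*(2*(k:ℝ)+3)
    = (4*(m:ℝ)^3+9*m^2+5*m)/3 := by
  induction m with
  | zero => simp
  | succ n ih => rw [Finset.sum_range_succ, ih]; push_cast; ring

lemma T1_odd (N m : ℕ) (hNm : N = 2*m+1) :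
    ∑ j ∈ Finset.range N, ((sfun N j : ℝ)+1) * ((sfun N (N-1-j) : ℝ)+1)
      = (2*(N:ℝ)^3+3*(N:ℝ)^2-2*(N:ℝ)+3)/6 := by
  have hR : Finset.range N = Finset.range (m + (m+1)) := by congr 1; omega
  rw [hR, Finset.sum_range_add, Finset.sum_range_succ']
  have h1 : ∀ j ∈ Finset.range m,
      ((sfun N j : ℝ)+1) * ((sfun N (N-1-j) : ℝ)+1)
        = (2*(j:ℝ)+1)*(2*(j:ℝ)+2) := by
    intro j hj
    rw [Finset.mem_range] at hj
    have e1 : sfun N j = 2*j := by unfold sfun; rw [if_pos (by omega)]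
    have e2 : sfun N (N-1-j) = 2*j+1 := by
      unfold sfun; rw [if_neg (by omega)]; omega
    rw [e1, e2]; push_cast; ring
  have h2 : ∀ j ∈ Finset.range m,
      ((sfun N (m + (j+1)) : ℝ)+1) * ((sfun N (N-1-(m + (j+1))) : ℝ)+1)
        = (fun l : ℕ => (2*(l:ℝ)+1)*(2*(l:ℝ)+2)) (m-1-j) := by
    intro j hj
    rw [Finset.mem_range] at hj
    have e1 : sfun N (m + (j+1)) = 2*(m-1-j)+1 := by
      unfold sfun; rw [if_neg (by omega)]; omega
    have e2 : sfun N (N-1-(m + (j+1))) = 2*(m-1-j) := by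
      unfold sfun; rw [if_pos (by omega)]; omega
    rw [e1, e2]; push_cast; ring
  have e3 : sfun N (m+0) = 2*m := by unfold sfun; rw [if_pos (by omega)]; omega
  have e4 : sfun N (N-1-(m+0)) = 2*m := by unfold sfun; rw [if_pos (by omega)]; omega
  rw [Finset.sum_congr rfl h1, Finset.sum_congr rfl h2, sumA,
    Finset.sum_range_reflect (fun l : ℕ => (2*(l:ℝ)+1)*(2*(l:ℝ)+2)) m, sumA, e3, e4]
  subst hNm; push_cast; ring

lemma T1_even (N m : ℕ) (hNm : N = 2*m) :
    ∑ j ∈ Finset.range N, ((sfun N j : ℝ)+1) * ((sfun N (N-1-j) : ℝ)+1)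
      = (2*(N:ℝ)^3+3*(N:ℝ)^2-2*(N:ℝ))/6 := by
  have hR : Finset.range N = Finset.range (m + m) := by congr 1; omega
  rw [hR, Finset.sum_range_add]
  have h1 : ∀ j ∈ Finset.range m,
      ((sfun N j : ℝ)+1) * ((sfun N (N-1-j) : ℝ)+1)
        = (2*(j:ℝ)+1)*(2*(j:ℝ)+2) := by
    intro j hj
    rw [Finset.mem_range] at hj
    have e1 : sfun N j = 2*j := by unfold sfun; rw [if_pos (by omega)]
    have e2 : sfun N (N-1-j) = 2*j+1 := by
      unfold sfun; rw [if_neg (by omega)]; omega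
    rw [e1, e2]; push_cast; ring
  have h2 : ∀ j ∈ Finset.range m,
      ((sfun N (m + j) : ℝ)+1) * ((sfun N (N-1-(m + j)) : ℝ)+1)
        = (fun l : ℕ => (2*(l:ℝ)+1)*(2*(l:ℝ)+2)) (m-1-j) := by
    intro j hj
    rw [Finset.mem_range] at hj
    have e1 : sfun N (m + j) = 2*(m-1-j)+1 := by
      unfold sfun; rw [if_neg (by omega)]; omega
    have e2 : sfun N (N-1-(m + j)) = 2*(m-1-j) := by
      unfold sfun; rw [if_pos (by omega)]; omega
    rw [e1, e2]; push_cast; ring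
  rw [Finset.sum_congr rfl h1, Finset.sum_congr rfl h2, sumA,
    Finset.sum_range_reflect (fun l : ℕ => (2*(l:ℝ)+1)*(2*(l:ℝ)+2)) m, sumA]
  subst hNm; push_cast; ring

lemma T2_odd (N m : ℕ) (hNm : N = 2*(m+1)+1) :
    ∑ j ∈ Finset.range N, ((sfun N ((j+1) % N) : ℝ)+1) * ((sfun N (N-1-j) : ℝ)+1)
      = (2*(N:ℝ)^3+3*(N:ℝ)^2-2*(N:ℝ)+3)/6 := by
  have hR : Finset.range N = Finset.range ((m+2) + (m+1)) := by congr 1; omega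
  have h1 : ∀ k ∈ Finset.range (m+1),
      ((sfun N ((k+1) % N) : ℝ)+1) * ((sfun N (N-1-k) : ℝ)+1)
        = (2*(k:ℝ)+2)*(2*(k:ℝ)+3) := by
    intro k hk
    rw [Finset.mem_range] at hk
    have e1 : sfun N ((k+1) % N) = 2*k+2 := by
      rw [Nat.mod_eq_of_lt (by omega)]; unfold sfun; rw [if_pos (by omega)]; omega
    have e2 : sfun N (N-1-k) = 2*k+1 := by
      unfold sfun; rw [if_neg (by omega)]; omega
    rw [e1, e2]; push_cast; ring
  have h2 : ∀ j ∈ Finset.range m,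
      ((sfun N ((m+2+j+1) % N) : ℝ)+1) * ((sfun N (N-1-(m+2+j)) : ℝ)+1)
        = (fun l : ℕ => (2*(l:ℝ)+2)*(2*(l:ℝ)+3)) (m-1-j) := by
    intro j hj
    rw [Finset.mem_range] at hj
    have e1 : sfun N ((m+2+j+1) % N) = 2*(m-1-j)+1 := by
      rw [Nat.mod_eq_of_lt (by omega)]; unfold sfun; rw [if_neg (by omega)]; omega
    have e2 : sfun N (N-1-(m+2+j)) = 2*(m-1-j)+2 := by
      unfold sfun; rw [if_pos (by omega)]; omega
    rw [e1, e2]; push_cast; ring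
  have e3 : sfun N ((m+1+1) % N) = 2*m+1 := by
    rw [Nat.mod_eq_of_lt (by omega)]; unfold sfun; rw [if_neg (by omega)]; omega
  have e4 : sfun N (N-1-(m+1)) = 2*m+2 := by
    unfold sfun; rw [if_pos (by omega)]; omega
  have e5 : sfun N ((m+2+m+1) % N) = 0 := by
    have h7 : m+2+m+1 = N := by omega
    rw [h7, Nat.mod_self]; unfold sfun; rw [if_pos (by omega)]
  have e6 : sfun N (N-1-(m+2+m)) = 0 := by
    have h7 : N-1-(m+2+m) = 0 := by omega
    rw [h7]; unfold sfun; rw [if_pos (by omega)]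
  have B1 : ∑ k ∈ Finset.range (m+2),
      ((sfun N ((k+1) % N) : ℝ)+1) * ((sfun N (N-1-k) : ℝ)+1)
      = (4*((m:ℝ)+1)^3+9*((m:ℝ)+1)^2+5*((m:ℝ)+1))/3 + (2*(m:ℝ)+2)*(2*(m:ℝ)+3) := by
    rw [Finset.sum_range_succ, Finset.sum_congr rfl h1, sumB, e3, e4]
    push_cast; ring
  have B2 : ∑ k ∈ Finset.range (m+1),
      ((sfun N ((m+2+k+1) % N) : ℝ)+1) * ((sfun N (N-1-(m+2+k)) : ℝ)+1)
      = (4*(m:ℝ)^3+9*(m:ℝ)^2+5*(m:ℝ))/3 + 1 := by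
    rw [Finset.sum_range_succ, Finset.sum_congr rfl h2,
      Finset.sum_range_reflect (fun l : ℕ => (2*(l:ℝ)+2)*(2*(l:ℝ)+3)) m, sumB, e5, e6]
    push_cast; ring
  rw [hR, Finset.sum_range_add, B1, B2]
  subst hNm; push_cast; ring

lemma T2_even (N m : ℕ) (hNm : N = 2*(m+1)) :
    ∑ j ∈ Finset.range N, ((sfun N ((j+1) % N) : ℝ)+1) * ((sfun N (N-1-j) : ℝ)+1)
      = (2*(N:ℝ)^3+3*(N:ℝ)^2-2*(N:ℝ)+6)/6 := by
  have hR : Finset.range N = Finset.range ((m+1) + (m+1)) := by congr 1; omega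
  have h1 : ∀ k ∈ Finset.range m,
      ((sfun N ((k+1) % N) : ℝ)+1) * ((sfun N (N-1-k) : ℝ)+1)
        = (2*(k:ℝ)+2)*(2*(k:ℝ)+3) := by
    intro k hk
    rw [Finset.mem_range] at hk
    have e1 : sfun N ((k+1) % N) = 2*k+2 := by
      rw [Nat.mod_eq_of_lt (by omega)]; unfold sfun; rw [if_pos (by omega)]; omega
    have e2 : sfun N (N-1-k) = 2*k+1 := by
      unfold sfun; rw [if_neg (by omega)]; omega
    rw [e1, e2]; push_cast; ring
  have h2 : ∀ j ∈ Finset.range m,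
      ((sfun N ((m+1+j+1) % N) : ℝ)+1) * ((sfun N (N-1-(m+1+j)) : ℝ)+1)
        = (fun l : ℕ => (2*(l:ℝ)+2)*(2*(l:ℝ)+3)) (m-1-j) := by
    intro j hj
    rw [Finset.mem_range] at hj
    have e1 : sfun N ((m+1+j+1) % N) = 2*(m-1-j)+1 := by
      rw [Nat.mod_eq_of_lt (by omega)]; unfold sfun; rw [if_neg (by omega)]; omega
    have e2 : sfun N (N-1-(m+1+j)) = 2*(m-1-j)+2 := by
      unfold sfun; rw [if_pos (by omega)]; omega
    rw [e1, e2]; push_cast; ring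
  have e3 : sfun N ((m+1) % N) = 2*m+1 := by
    rw [Nat.mod_eq_of_lt (by omega)]; unfold sfun; rw [if_neg (by omega)]; omega
  have e4 : sfun N (N-1-m) = 2*m+1 := by
    unfold sfun; rw [if_neg (by omega)]; omega
  have e5 : sfun N ((m+1+m+1) % N) = 0 := by
    have h7 : m+1+m+1 = N := by omega
    rw [h7, Nat.mod_self]; unfold sfun; rw [if_pos (by omega)]
  have e6 : sfun N (N-1-(m+1+m)) = 0 := by
    have h7 : N-1-(m+1+m) = 0 := by omega
    rw [h7]; unfold sfun; rw [if_pos (by omega)]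
  have B1 : ∑ k ∈ Finset.range (m+1),
      ((sfun N ((k+1) % N) : ℝ)+1) * ((sfun N (N-1-k) : ℝ)+1)
      = (4*(m:ℝ)^3+9*(m:ℝ)^2+5*(m:ℝ))/3 + (2*(m:ℝ)+2)^2 := by
    rw [Finset.sum_range_succ, Finset.sum_congr rfl h1, sumB, e3, e4]
    push_cast; ring
  have B2 : ∑ k ∈ Finset.range (m+1),
      ((sfun N ((m+1+k+1) % N) : ℝ)+1) * ((sfun N (N-1-(m+1+k)) : ℝ)+1)
      = (4*(m:ℝ)^3+9*(m:ℝ)^2+5*(m:ℝ))/3 + 1 := by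
    rw [Finset.sum_range_succ, Finset.sum_congr rfl h2,
      Finset.sum_range_reflect (fun l : ℕ => (2*(l:ℝ)+2)*(2*(l:ℝ)+3)) m, sumB, e5, e6]
    push_cast; ring
  rw [hR, Finset.sum_range_add, B1, B2]
  subst hNm; push_cast; ring

lemma sigmaTilde_val (N : ℕ) (j : Fin N) : ((sigmaTilde N j : Fin N) : ℕ) = sfun N j.val := by
  simp only [sigmaTilde, Equiv.ofBijective_apply, sfun]
  split_ifs <;> rfl

lemma finRotate_val : ∀ {N : ℕ} (k : Fin N), ((finRotate N k : Fin N) : ℕ) = (k.val + 1) % N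
  | 0, k => k.elim0
  | (n+1), k => by
    rw [finRotate_succ_apply, Fin.val_add_one]
    split_ifs with h
    · rw [h, Fin.val_last, Nat.mod_self]
    · rw [Nat.mod_eq_of_lt (by have := Fin.val_lt_last h; omega)]

lemma piTilde_val (N : ℕ) (k : Fin N) : ((piTilde N k : Fin N) : ℕ) = sfun N (N - 1 - k.val) := by
  have : piTilde N k = sigmaTilde N k.rev := rfl
  rw [this, sigmaTilde_val]
  congr 1
  rw [Fin.val_rev]
  omega

lemma TsumEq1 (N : ℕ) :
    ∑ i : Fin N, ((i:ℝ)+1)*(((piTilde N * (sigmaTilde N)⁻¹) i : ℝ)+1)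
      = ∑ j ∈ Finset.range N, ((sfun N j:ℝ)+1)*((sfun N (N-1-j):ℝ)+1) := by
  rw [← Equiv.sum_comp (sigmaTilde N)
    (fun i => ((i:ℝ)+1)*(((piTilde N * (sigmaTilde N)⁻¹) i : ℝ)+1)),
    ← Fin.sum_univ_eq_sum_range (fun j => ((sfun N j:ℝ)+1)*((sfun N (N-1-j):ℝ)+1)) N]
  refine Finset.sum_congr rfl fun j _ => ?_
  have h1 : (piTilde N * (sigmaTilde N)⁻¹) (sigmaTilde N j) = piTilde N j := by
    simp [Equiv.Perm.mul_apply]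
  simp only [h1, sigmaTilde_val, piTilde_val]
lemma TsumEq2 (N : ℕ) :
    ∑ i : Fin N, ((i:ℝ)+1)*(((piTilde N * (finRotate N)⁻¹ * (sigmaTilde N)⁻¹) i : ℝ)+1)
      = ∑ j ∈ Finset.range N, ((sfun N ((j+1) % N):ℝ)+1)*((sfun N (N-1-j):ℝ)+1) := by
  rw [← Equiv.sum_comp ((finRotate N).trans (sigmaTilde N))
    (fun i => ((i:ℝ)+1)*(((piTilde N * (finRotate N)⁻¹ * (sigmaTilde N)⁻¹) i : ℝ)+1)),
    ← Fin.sum_univ_eq_sum_range (fun j => ((sfun N ((j+1) % N):ℝ)+1)*((sfun N (N-1-j):ℝ)+1)) N]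
  refine Finset.sum_congr rfl fun k _ => ?_
  have h1 : (piTilde N * (finRotate N)⁻¹ * (sigmaTilde N)⁻¹) (sigmaTilde N (finRotate N k))
      = piTilde N k := by
    simp only [Equiv.Perm.mul_apply, Equiv.Perm.inv_def, Equiv.symm_apply_apply]
  simp only [Equiv.trans_apply, h1, sigmaTilde_val, piTilde_val, finRotate_val]

/-- The law of a pair of two independent samples of `N` i.i.d. points uniformly
distributed on `[0,1]` (red sample, blue sample). -/
noncomputable def unifPair (N : ℕ) : Measure ((Fin N → ℝ) × (Fin N → ℝ)) :=
  (Measure.pi fun _ : Fin N => volume.restrict (Set.Icc (0:ℝ) 1)).prod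
    (Measure.pi fun _ : Fin N => volume.restrict (Set.Icc (0:ℝ) 1))

/-- The increasing order statistics of a finite sample `x`. -/
noncomputable def orderStat {N : ℕ} (x : Fin N → ℝ) : Fin N → ℝ := x ∘ Tuple.sort x

/-- The cost of the assignment associated with the permutation `μ`, for cost exponent
`p = 2`: `E[m(μ)] = Σ_i (r_i − b_{μ(i)})²`, where `r`, `b` are the increasing order
statistics of the two samples. -/
noncomputable def matchingCostSq (N : ℕ) (μ : Equiv.Perm (Fin N))
    (q : (Fin N → ℝ) × (Fin N → ℝ)) : ℝ :=
  ∑ i : Fin N, (orderStat q.1 i - orderStat q.2 (μ i)) ^ 2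

variable {N : ℕ}

lemma orderStat_monotone (x : Fin N → ℝ) : Monotone (orderStat x) := Tuple.monotone_sort x

lemma orderStat_count (x : Fin N → ℝ) (t : ℝ) :
    (Finset.univ.filter fun k => orderStat x k ≤ t).card
      = (Finset.univ.filter fun j => x j ≤ t).card := by
  apply Finset.card_bij (fun k _ => Tuple.sort x k)
  · intro k hk
    simp only [Finset.mem_filter, Finset.mem_univ, true_and] at hk ⊢
    exact hk
  · intro a _ b _ hab
    exact (Tuple.sort x).injective hab
  · intro j hj
    simp only [Finset.mem_filter, Finset.mem_univ, true_and] at hj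
    refine ⟨(Tuple.sort x).symm j, ?_, by simp⟩
    simp only [Finset.mem_filter, Finset.mem_univ, true_and, orderStat, Function.comp_apply,
      Equiv.apply_symm_apply]
    exact Finset.mem_filter.mpr ⟨Finset.mem_univ _, by simpa [orderStat] using hj⟩

lemma orderStat_le_iff (x : Fin N → ℝ) (i : Fin N) (t : ℝ) :
    orderStat x i ≤ t ↔ i.val < (Finset.univ.filter fun j => x j ≤ t).card := by
  rw [← orderStat_count]
  constructor
  · intro h
    have hsub : Finset.Iic i ⊆ Finset.univ.filter fun k => orderStat x k ≤ t := by
      intro k hk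
      rw [Finset.mem_Iic] at hk
      simp only [Finset.mem_filter, Finset.mem_univ, true_and]
      exact le_trans (orderStat_monotone x hk) h
    have := Finset.card_le_card hsub
    rw [Fin.card_Iic] at this
    omega
  · intro h
    by_contra hlt
    push_neg at hlt
    have hsub : (Finset.univ.filter fun k => orderStat x k ≤ t) ⊆ Finset.Iio i := by
      intro k hk
      simp only [Finset.mem_filter, Finset.mem_univ, true_and] at hk
      rw [Finset.mem_Iio]
      by_contra hge
      push_neg at hge
      have := orderStat_monotone x hge
      linarith
    have := Finset.card_le_card hsub
    rw [Fin.card_Iio] at this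
    omega

lemma measurable_orderStat (i : Fin N) :
    Measurable (fun x : Fin N → ℝ => orderStat x i) := by
  apply measurable_of_Iic
  intro t
  have hset : (fun x : Fin N → ℝ => orderStat x i) ⁻¹' Set.Iic t
      = ⋃ (S : Finset (Fin N)) (_ : S.card = i.val + 1),
          ⋂ j ∈ S, {x : Fin N → ℝ | x j ≤ t} := by
    ext x
    simp only [Set.mem_preimage, Set.mem_Iic, Set.mem_iUnion, Set.mem_iInter, Set.mem_setOf_eq]
    rw [orderStat_le_iff]
    constructor
    · intro h
      obtain ⟨S, hSsub, hScard⟩ :=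
        Finset.exists_subset_card_eq (s := Finset.univ.filter fun j => x j ≤ t)
          (n := i.val + 1) (by omega)
      exact ⟨S, hScard, fun j hj => (Finset.mem_filter.mp (hSsub hj)).2⟩
    · rintro ⟨S, hcard, hS⟩
      have hsub : S ⊆ Finset.univ.filter fun j => x j ≤ t := fun j hj =>
        Finset.mem_filter.mpr ⟨Finset.mem_univ _, hS j hj⟩
      have := Finset.card_le_card hsub
      omega
  rw [hset]
  exact MeasurableSet.iUnion fun S => MeasurableSet.iUnion fun _ =>
    MeasurableSet.biInter (Set.to_countable _) fun j _ =>
      measurableSet_le (measurable_pi_apply j) measurable_const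

lemma beta_nat (n : ℕ) : ∀ k : ℕ, ∫ t in (0:ℝ)..1, t^k * (1-t)^n
    = ((k.factorial : ℝ) * n.factorial) / (k+n+1).factorial := by
  induction n with
  | zero =>
    intro k
    simp only [pow_zero, mul_one, Nat.factorial_zero, Nat.cast_one, Nat.add_zero]
    rw [integral_pow]
    rw [Nat.factorial_succ]
    have h1 : (k.factorial : ℝ) ≠ 0 := Nat.cast_ne_zero.mpr (Nat.factorial_ne_zero k)
    push_cast
    field_simp
    simp
  | succ n ih =>
    intro k
    have hu : ∀ x ∈ Set.uIcc (0:ℝ) 1, HasDerivAt (fun t : ℝ => (1-t)^(n+1))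
        (-(((n:ℝ)+1) * (1-x)^n)) x := by
      intro x _
      have h0 : HasDerivAt (fun t : ℝ => 1 - t) (-1) x := (hasDerivAt_id x).const_sub 1
      have := h0.pow (n+1)
      refine this.congr_deriv ?_
      push_cast [Nat.add_sub_cancel]
      ring
    have hv : ∀ x ∈ Set.uIcc (0:ℝ) 1, HasDerivAt (fun t : ℝ => t^(k+1)/((k:ℝ)+1))
        (x^k) x := by
      intro x _
      have := (hasDerivAt_pow (k+1) x).div_const ((k:ℝ)+1)
      refine this.congr_deriv ?_
      have h1 : ((k:ℝ)+1) ≠ 0 := by positivity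
      push_cast [Nat.add_sub_cancel]
      field_simp
    have IBP := intervalIntegral.integral_mul_deriv_eq_deriv_mul hu hv
      (((by fun_prop : Continuous fun x : ℝ => -(((n:ℝ)+1) * (1-x)^n)).intervalIntegrable) 0 1)
      (((by fun_prop : Continuous fun x : ℝ => x^k).intervalIntegrable) 0 1)
    have hcomm : ∫ t in (0:ℝ)..1, t^k * (1-t)^(n+1) = ∫ t in (0:ℝ)..1, (1-t)^(n+1) * t^k := by
      simp_rw [mul_comm]
    rw [hcomm, IBP]
    have hrw : ∀ t : ℝ, -(((n:ℝ)+1) * (1-t)^n) * (t^(k+1)/((k:ℝ)+1))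
        = (-(((n:ℝ)+1)/((k:ℝ)+1))) * (t^(k+1)*(1-t)^n) := by
      intro t; ring
    simp_rw [hrw]
    rw [intervalIntegral.integral_const_mul, ih (k+1)]
    have h1 : ((k:ℝ)+1) ≠ 0 := by positivity
    have h2 : ((k+1+n+1).factorial : ℝ) ≠ 0 := Nat.cast_ne_zero.mpr (Nat.factorial_ne_zero _)
    have h3 : (k+(n+1)+1) = (k+1+n)+1 := by omega
    have h4 : (k+1+n+1) = (k+1+n)+1 := by omega
    rw [h3, h4, Nat.factorial_succ (k+1+n), Nat.factorial_succ k, Nat.factorial_succ n]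
    push_cast
    have h5 : ((k+1+n).factorial : ℝ) ≠ 0 := Nat.cast_ne_zero.mpr (Nat.factorial_ne_zero _)
    field_simp
    ring

noncomputable def unifCube (N : ℕ) : Measure (Fin N → ℝ) :=
  Measure.pi fun _ : Fin N => volume.restrict (Set.Icc (0:ℝ) 1)

noncomputable def muIcc : Measure ℝ := volume.restrict (Set.Icc (0:ℝ) 1)

instance : IsProbabilityMeasure muIcc := by
  constructor
  rw [muIcc, Measure.restrict_apply_univ, Real.volume_Icc]
  norm_num

instance instCubeProb (N : ℕ) : IsProbabilityMeasure (unifCube N) := by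
  constructor
  rw [unifCube, Measure.pi_univ]
  simp only [show (volume.restrict (Set.Icc (0:ℝ) 1)) = muIcc from rfl, measure_univ,
    Finset.prod_const_one]

lemma cube_ae_box (N : ℕ) : ∀ᵐ x ∂(unifCube N), ∀ j, x j ∈ Set.Icc (0:ℝ) 1 := by
  have hbox : MeasurableSet (Set.pi Set.univ fun _ : Fin N => Set.Icc (0:ℝ) 1) :=
    MeasurableSet.univ_pi fun _ => measurableSet_Icc
  have h1 : unifCube N (Set.pi Set.univ fun _ : Fin N => Set.Icc (0:ℝ) 1) = 1 := by
    rw [unifCube, Measure.pi_pi]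
    have : ∀ _j : Fin N, (volume.restrict (Set.Icc (0:ℝ) 1)) (Set.Icc (0:ℝ) 1) = 1 := by
      intro j
      rw [Measure.restrict_apply measurableSet_Icc, Set.inter_self, Real.volume_Icc]
      norm_num
    simp [this]
  have h0 : unifCube N (Set.pi Set.univ fun _ : Fin N => Set.Icc (0:ℝ) 1)ᶜ = 0 := by
    rw [measure_compl hbox (measure_ne_top _ _), h1, measure_univ]
    simp
  rw [MeasureTheory.ae_iff]
  have hseteq : {x : Fin N → ℝ | ¬ ∀ j, x j ∈ Set.Icc (0:ℝ) 1}
      = (Set.pi Set.univ fun _ : Fin N => Set.Icc (0:ℝ) 1)ᶜ := by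
    ext x
    simp only [Set.mem_setOf_eq, Set.mem_compl_iff, Set.mem_pi, Set.mem_univ, true_implies]
  rw [hseteq]
  exact h0

lemma ae_orderStat_mem (N : ℕ) (i : Fin N) :
    ∀ᵐ x ∂(unifCube N), orderStat x i ∈ Set.Icc (0:ℝ) 1 := by
  filter_upwards [cube_ae_box N] with x hx
  exact hx (Tuple.sort x i)

lemma map_eval (N : ℕ) (j : Fin N) :
    (unifCube N).map (fun x => x j) = muIcc := by
  apply Measure.ext
  intro s hs
  rw [Measure.map_apply (measurable_pi_apply j) hs]
  have hpre : (fun x : Fin N → ℝ => x j) ⁻¹' s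
      = Set.pi Set.univ (Function.update (fun _ : Fin N => (Set.univ : Set ℝ)) j s) := by
    ext x
    simp only [Set.mem_preimage, Set.mem_pi, Set.mem_univ, true_implies]
    constructor
    · intro hx i
      rcases eq_or_ne i j with rfl | hij
      · rwa [Function.update_self]
      · rw [Function.update_of_ne hij]; trivial
    · intro hx
      have := hx j
      rwa [Function.update_self] at this
  rw [hpre, unifCube, Measure.pi_pi]
  rw [Finset.prod_eq_single_of_mem j (Finset.mem_univ j) (fun b _ hb => by
    rw [Function.update_of_ne hb]
    exact measure_univ (μ := muIcc))]
  rw [Function.update_self]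
  rfl

lemma integral_eval (N : ℕ) (j : Fin N) (f : ℝ → ℝ) (hf : Measurable f) :
    ∫ x, f (x j) ∂(unifCube N) = ∫ t, f t ∂muIcc := by
  rw [← map_eval N j, integral_map (measurable_pi_apply j).aemeasurable]
  rw [map_eval N j]
  exact hf.aestronglyMeasurable

lemma integral_sq_muIcc : ∫ t, t^2 ∂muIcc = 1/3 := by
  have : ∫ t, t^2 ∂muIcc = ∫ t in Set.Icc (0:ℝ) 1, t^2 := rfl
  rw [this, MeasureTheory.integral_Icc_eq_integral_Ioc,
    ← intervalIntegral.integral_of_le zero_le_one, integral_pow]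
  norm_num

lemma slice_measure (N : ℕ) (i : Fin N) {t : ℝ} (ht : t ∈ Set.Icc (0:ℝ) 1) :
    ∫ x, (if t < orderStat x i then (1:ℝ) else 0) ∂(unifCube N)
      = ∑ S ∈ Finset.univ.filter (fun S : Finset (Fin N) => S.card ≤ i.val),
          t ^ S.card * (1-t) ^ (N - S.card) := by
  obtain ⟨ht0, ht1⟩ := ht
  set U : Set (Fin N → ℝ) := {x | t < orderStat x i} with hU
  have hUmeas : MeasurableSet U := measurableSet_lt measurable_const (measurable_orderStat i)
  have hind : (fun x : Fin N → ℝ => (if t < orderStat x i then (1:ℝ) else 0))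
      = U.indicator (fun _ => 1) := by
    ext x; simp [Set.indicator_apply, hU]
  rw [hind, MeasureTheory.integral_indicator hUmeas, MeasureTheory.setIntegral_const,
    smul_eq_mul, mul_one]
  set A : Finset (Fin N) → Set (Fin N → ℝ) :=
    fun S => Set.pi Set.univ fun j => if j ∈ S then Set.Iic t else Set.Ioi t with hA
  have hmemA : ∀ (S : Finset (Fin N)) (x : Fin N → ℝ),
      x ∈ A S ↔ (∀ j, x j ≤ t ↔ j ∈ S) := by
    intro S x
    simp only [hA, Set.mem_pi, Set.mem_univ, true_implies]
    constructor
    · intro h j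
      have hj' := h j
      by_cases hj : j ∈ S
      · rw [if_pos hj] at hj'; exact ⟨fun _ => hj, fun _ => hj'⟩
      · rw [if_neg hj] at hj'
        exact ⟨fun hle => absurd hle (not_le.mpr hj'), fun hmem => absurd hmem hj⟩
    · intro h j
      by_cases hj : j ∈ S
      · rw [if_pos hj]; exact (h j).mpr hj
      · rw [if_neg hj]; exact lt_of_not_ge fun hle => hj ((h j).mp hle)
  have hAmeas : ∀ S : Finset (Fin N), MeasurableSet (A S) := by
    intro S
    refine MeasurableSet.univ_pi fun j => ?_
    by_cases hj : j ∈ S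
    · rw [if_pos hj]; exact measurableSet_Iic
    · rw [if_neg hj]; exact measurableSet_Ioi
  have hUeq : U = ⋃ S ∈ Finset.univ.filter (fun S : Finset (Fin N) => S.card ≤ i.val), A S := by
    ext x
    simp only [hU, Set.mem_setOf_eq, Set.mem_iUnion, Finset.mem_filter, Finset.mem_univ, true_and,
      exists_prop]
    constructor
    · intro hx
      refine ⟨Finset.univ.filter fun j => x j ≤ t, ?_, ?_⟩
      · have h2 : ¬(i.val < (Finset.univ.filter fun j => x j ≤ t).card) := fun hc =>
          (not_le.mpr hx) ((orderStat_le_iff x i t).mpr hc)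
        omega
      · rw [hmemA]; intro j
        simp [Finset.mem_filter]
    · rintro ⟨S, hScard, hxA⟩
      rw [hmemA] at hxA
      have hfeq : Finset.univ.filter (fun j => x j ≤ t) = S := by
        ext j
        simp only [Finset.mem_filter, Finset.mem_univ, true_and]
        exact hxA j
      by_contra hle
      push_neg at hle
      have := (orderStat_le_iff x i t).mp hle
      rw [hfeq] at this
      omega
  have hdisj : (↑(Finset.univ.filter fun S : Finset (Fin N) => S.card ≤ i.val) :
      Set (Finset (Fin N))).PairwiseDisjoint A := by
    intro S _ S' _ hSS'
    refine Set.disjoint_left.mpr fun x hxS hxS' => hSS' ?_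
    rw [hmemA] at hxS hxS'
    ext j
    rw [← hxS j, ← hxS' j]
  have hmeasA : ∀ S : Finset (Fin N), unifCube N (A S)
      = ENNReal.ofReal t ^ S.card * ENNReal.ofReal (1-t) ^ (N - S.card) := by
    intro S
    have hIic : (volume.restrict (Set.Icc (0:ℝ) 1)) (Set.Iic t) = ENNReal.ofReal t := by
      rw [Measure.restrict_apply measurableSet_Iic]
      have hseteq : Set.Iic t ∩ Set.Icc (0:ℝ) 1 = Set.Icc 0 t := by
        ext u; simp only [Set.mem_inter_iff, Set.mem_Iic, Set.mem_Icc]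
        constructor
        · rintro ⟨h1, h2, h3⟩; exact ⟨h2, h1⟩
        · rintro ⟨h1, h2⟩; exact ⟨h2, h1, le_trans h2 ht1⟩
      rw [hseteq, Real.volume_Icc, sub_zero]
    have hIoi : (volume.restrict (Set.Icc (0:ℝ) 1)) (Set.Ioi t) = ENNReal.ofReal (1-t) := by
      rw [Measure.restrict_apply measurableSet_Ioi]
      have hseteq : Set.Ioi t ∩ Set.Icc (0:ℝ) 1 = Set.Ioc t 1 := by
        ext u; simp only [Set.mem_inter_iff, Set.mem_Ioi, Set.mem_Icc, Set.mem_Ioc]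
        constructor
        · rintro ⟨h1, h2, h3⟩; exact ⟨h1, h3⟩
        · rintro ⟨h1, h2⟩; exact ⟨h1, le_trans ht0 (le_of_lt h1), h2⟩
      rw [hseteq, Real.volume_Ioc]
    have : unifCube N (A S)
        = ∏ j, (volume.restrict (Set.Icc (0:ℝ) 1)) (if j ∈ S then Set.Iic t else Set.Ioi t) := by
      rw [hA, unifCube, Measure.pi_pi]
    rw [this, ← Finset.prod_mul_prod_compl S]
    have e1 : ∀ j ∈ S, (volume.restrict (Set.Icc (0:ℝ) 1)) (if j ∈ S then Set.Iic t else Set.Ioi t)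
        = ENNReal.ofReal t := by
      intro j hj; rw [if_pos hj, hIic]
    have e2 : ∀ j ∈ Sᶜ, (volume.restrict (Set.Icc (0:ℝ) 1)) (if j ∈ S then Set.Iic t else Set.Ioi t)
        = ENNReal.ofReal (1-t) := by
      intro j hj; rw [if_neg (Finset.mem_compl.mp hj), hIoi]
    rw [Finset.prod_congr rfl e1, Finset.prod_congr rfl e2, Finset.prod_const, Finset.prod_const,
      Finset.card_compl, Fintype.card_fin]
  rw [measureReal_def, hUeq, measure_biUnion_finset hdisj (fun S _ => hAmeas S),
    Finset.sum_congr rfl (fun S _ => hmeasA S), ENNReal.toReal_sum]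
  · refine Finset.sum_congr rfl fun S _ => ?_
    rw [ENNReal.toReal_mul, ENNReal.toReal_pow, ENNReal.toReal_pow,
      ENNReal.toReal_ofReal ht0, ENNReal.toReal_ofReal (by linarith)]
  · intro S _
    exact ENNReal.mul_ne_top (ENNReal.pow_ne_top ENNReal.ofReal_ne_top)
      (ENNReal.pow_ne_top ENNReal.ofReal_ne_top)

lemma moment1 (N : ℕ) (i : Fin N) :
    ∫ x, orderStat x i ∂(unifCube N) = ((i:ℝ)+1)/((N:ℝ)+1) := by
  have hintF : Integrable
      (Function.uncurry (fun x t => if t < orderStat x i then (1:ℝ) else 0))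
      ((unifCube N).prod muIcc) := by
    have hmeas : MeasurableSet {p : (Fin N → ℝ) × ℝ | p.2 < orderStat p.1 i} :=
      measurableSet_lt measurable_snd ((measurable_orderStat i).comp measurable_fst)
    have heq : Function.uncurry (fun x t => if t < orderStat x i then (1:ℝ) else 0)
        = Set.indicator {p : (Fin N → ℝ) × ℝ | p.2 < orderStat p.1 i} (fun _ => 1) := by
      ext p
      simp [Function.uncurry, Set.indicator_apply]
    rw [heq]
    exact (integrable_const 1).indicator hmeas
  have hswap : ∫ x, orderStat x i ∂(unifCube N)
      = ∫ t, (∫ x, (if t < orderStat x i then (1:ℝ) else 0) ∂(unifCube N)) ∂muIcc := by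
    rw [← MeasureTheory.integral_integral_swap hintF]
    apply integral_congr_ae
    filter_upwards [ae_orderStat_mem N i] with x hx
    obtain ⟨h0, h1⟩ := hx
    have hindic : (fun t => if t < orderStat x i then (1:ℝ) else 0)
        = (Set.Iio (orderStat x i)).indicator (fun _ => 1) := by
      ext u; simp [Set.indicator_apply]
    rw [hindic, MeasureTheory.integral_indicator measurableSet_Iio]
    rw [MeasureTheory.setIntegral_const, smul_eq_mul, mul_one]
    have hseteq : Set.Iio (orderStat x i) ∩ Set.Icc (0:ℝ) 1 = Set.Ico 0 (orderStat x i) := by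
      ext u; simp only [Set.mem_inter_iff, Set.mem_Iio, Set.mem_Icc, Set.mem_Ico]
      constructor
      · rintro ⟨hh1, hh2, hh3⟩; exact ⟨hh2, hh1⟩
      · rintro ⟨hh1, hh2⟩; exact ⟨hh2, hh1, by linarith⟩
    rw [show muIcc = volume.restrict (Set.Icc (0:ℝ) 1) from rfl,
      measureReal_def, Measure.restrict_apply measurableSet_Iio, hseteq, Real.volume_Ico, sub_zero,
      ENNReal.toReal_ofReal h0]
  rw [hswap]
  have houter : ∫ t, (∫ x, (if t < orderStat x i then (1:ℝ) else 0) ∂(unifCube N)) ∂muIcc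
      = ∫ t in Set.Icc (0:ℝ) 1,
        (∑ S ∈ Finset.univ.filter (fun S : Finset (Fin N) => S.card ≤ i.val),
          t ^ S.card * (1-t) ^ (N - S.card)) := by
    rw [show muIcc = volume.restrict (Set.Icc (0:ℝ) 1) from rfl]
    exact MeasureTheory.setIntegral_congr_fun measurableSet_Icc
      (fun t ht => slice_measure N i ht)
  rw [houter, MeasureTheory.integral_finset_sum]
  · have hterm : ∀ S ∈ Finset.univ.filter (fun S : Finset (Fin N) => S.card ≤ i.val),
        ∫ t in Set.Icc (0:ℝ) 1, t ^ S.card * (1-t) ^ (N - S.card)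
          = ((S.card.factorial : ℝ) * (N - S.card).factorial) / (N+1).factorial := by
      intro S hS
      have hle : S.card ≤ N := by
        have := Finset.card_le_univ S
        rwa [Fintype.card_fin] at this
      rw [MeasureTheory.integral_Icc_eq_integral_Ioc,
        ← intervalIntegral.integral_of_le zero_le_one, beta_nat,
        show S.card + (N - S.card) + 1 = N + 1 by omega]
    rw [Finset.sum_congr rfl hterm]
    have hpart : (Finset.univ.filter fun S : Finset (Fin N) => S.card ≤ i.val)
        = (Finset.range (i.val+1)).biUnion (fun k => Finset.powersetCard k Finset.univ) := by
      ext S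
      simp only [Finset.mem_filter, Finset.mem_univ, true_and, Finset.mem_biUnion,
        Finset.mem_range, Finset.mem_powersetCard]
      constructor
      · intro h
        exact ⟨S.card, by omega, Finset.subset_univ S, rfl⟩
      · rintro ⟨k, hk, _, rfl⟩
        omega
    have hdisj : ∀ k ∈ Finset.range (i.val+1), ∀ l ∈ Finset.range (i.val+1), k ≠ l →
        Disjoint (Finset.powersetCard k (Finset.univ : Finset (Fin N)))
          (Finset.powersetCard l Finset.univ) := by
      intro k _ l _ hkl
      rw [Finset.disjoint_left]
      intro S hSk hSl
      rw [Finset.mem_powersetCard] at hSk hSl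
      exact hkl (hSk.2 ▸ hSl.2)
    rw [hpart, Finset.sum_biUnion hdisj]
    have hinner : ∀ k ∈ Finset.range (i.val+1),
        ∑ S ∈ Finset.powersetCard k (Finset.univ : Finset (Fin N)),
          ((S.card.factorial : ℝ) * (N - S.card).factorial) / (N+1).factorial
          = 1/((N:ℝ)+1) := by
      intro k hk
      rw [Finset.mem_range] at hk
      have hkN : k ≤ N := by
        have := i.isLt; omega
      have hcongr : ∀ S ∈ Finset.powersetCard k (Finset.univ : Finset (Fin N)),
          ((S.card.factorial : ℝ) * (N - S.card).factorial) / (N+1).factorial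
            = ((k.factorial : ℝ) * (N - k).factorial) / (N+1).factorial := by
        intro S hS
        rw [(Finset.mem_powersetCard.mp hS).2]
      rw [Finset.sum_congr rfl hcongr, Finset.sum_const, Finset.card_powersetCard,
        Finset.card_univ, Fintype.card_fin, nsmul_eq_mul]
      have hnat : (N.choose k) * k.factorial * (N-k).factorial = N.factorial :=
        Nat.choose_mul_factorial_mul_factorial hkN
      have hfacpos : ((N.factorial : ℝ)) ≠ 0 := Nat.cast_ne_zero.mpr (Nat.factorial_ne_zero N)
      have hN1 : ((N:ℝ)+1) ≠ 0 := by positivity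
      have hnatR : ((N.choose k : ℝ)) * (k.factorial : ℝ) * ((N-k).factorial : ℝ)
          = (N.factorial : ℝ) := by exact_mod_cast hnat
      rw [Nat.factorial_succ N]
      push_cast
      field_simp
      linear_combination hnatR
    rw [Finset.sum_congr rfl hinner, Finset.sum_const, Finset.card_range, nsmul_eq_mul]
    push_cast
    ring
  · intro S _
    apply Continuous.integrableOn_Icc
    fun_prop

lemma unifPair_eq (N : ℕ) : unifPair N = (unifCube N).prod (unifCube N) := rfl

instance instRestrictProb : IsProbabilityMeasure (volume.restrict (Set.Icc (0:ℝ) 1)) := by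
  constructor
  rw [Measure.restrict_apply_univ, Real.volume_Icc]
  norm_num

instance instPairProb (N : ℕ) : IsProbabilityMeasure (unifPair N) := by
  rw [show unifPair N = (unifCube N).prod (unifCube N) from rfl]
  infer_instance

lemma pair_ae_fst (N : ℕ) :
    ∀ᵐ q ∂(unifPair N), ∀ j, q.1 j ∈ Set.Icc (0:ℝ) 1 := by
  have hb := cube_ae_box N
  rw [MeasureTheory.ae_iff] at hb ⊢
  have hset : {q : (Fin N → ℝ) × (Fin N → ℝ) | ¬ ∀ j, q.1 j ∈ Set.Icc (0:ℝ) 1}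
      = {x : Fin N → ℝ | ¬ ∀ j, x j ∈ Set.Icc (0:ℝ) 1} ×ˢ (Set.univ : Set (Fin N → ℝ)) := by
    ext q; simp [Set.mem_prod]
  rw [hset, unifPair_eq, Measure.prod_prod, hb, zero_mul]

lemma pair_ae_snd (N : ℕ) :
    ∀ᵐ q ∂(unifPair N), ∀ j, q.2 j ∈ Set.Icc (0:ℝ) 1 := by
  have hb := cube_ae_box N
  rw [MeasureTheory.ae_iff] at hb ⊢
  have hset : {q : (Fin N → ℝ) × (Fin N → ℝ) | ¬ ∀ j, q.2 j ∈ Set.Icc (0:ℝ) 1}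
      = (Set.univ : Set (Fin N → ℝ)) ×ˢ {x : Fin N → ℝ | ¬ ∀ j, x j ∈ Set.Icc (0:ℝ) 1} := by
    ext q; simp [Set.mem_prod]
  rw [hset, unifPair_eq, Measure.prod_prod, hb, mul_zero]

lemma orderStat_mem_of_box {N : ℕ} {x : Fin N → ℝ} (hx : ∀ j, x j ∈ Set.Icc (0:ℝ) 1)
    (i : Fin N) : orderStat x i ∈ Set.Icc (0:ℝ) 1 := hx (Tuple.sort x i)

lemma sq_sum (N : ℕ) :
    ∑ i : Fin N, ∫ x, (orderStat x i)^2 ∂(unifCube N) = (N:ℝ)/3 := by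
  have hint : ∀ i : Fin N, Integrable (fun x => (orderStat x i)^2) (unifCube N) := by
    intro i
    refine Integrable.mono' (integrable_const 1)
      (((measurable_orderStat i).pow_const 2).aestronglyMeasurable) ?_
    filter_upwards [cube_ae_box N] with x hx
    obtain ⟨h0, h1⟩ := orderStat_mem_of_box hx i
    rw [Real.norm_eq_abs, abs_of_nonneg (by positivity)]
    nlinarith
  have hintc : ∀ j : Fin N, Integrable (fun x : Fin N → ℝ => (x j)^2) (unifCube N) := by
    intro j
    refine Integrable.mono' (integrable_const 1)
      (((measurable_pi_apply j).pow_const 2).aestronglyMeasurable) ?_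
    filter_upwards [cube_ae_box N] with x hx
    obtain ⟨h0, h1⟩ := hx j
    rw [Real.norm_eq_abs, abs_of_nonneg (by positivity)]
    nlinarith
  rw [← MeasureTheory.integral_finset_sum Finset.univ (fun i _ => hint i)]
  have hpt : (fun x : Fin N → ℝ => ∑ i : Fin N, (orderStat x i)^2)
      = (fun x : Fin N → ℝ => ∑ j : Fin N, (x j)^2) := by
    funext x
    simp only [orderStat, Function.comp_apply]
    exact Equiv.sum_comp (Tuple.sort x) (fun j => (x j)^2)
  rw [hpt, MeasureTheory.integral_finset_sum Finset.univ (fun j _ => hintc j)]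
  have hj : ∀ j : Fin N, ∫ x : Fin N → ℝ, (x j)^2 ∂(unifCube N) = 1/3 := by
    intro j
    rw [integral_eval N j (fun t => t^2) (by fun_prop), integral_sq_muIcc]
  rw [Finset.sum_congr rfl (fun j _ => hj j), Finset.sum_const, Finset.card_univ,
    Fintype.card_fin, nsmul_eq_mul]
  ring

lemma cost_formula (N : ℕ) (μ : Equiv.Perm (Fin N)) :
    ∫ q, matchingCostSq N μ q ∂(unifPair N)
      = 2*(N:ℝ)/3 - 2/((N:ℝ)+1)^2 * ∑ i : Fin N, ((i:ℝ)+1)*(((μ i : Fin N) : ℝ)+1) := by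
  have hmA : ∀ i : Fin N, Measurable (fun q : (Fin N → ℝ) × (Fin N → ℝ) => orderStat q.1 i) :=
    fun i => (measurable_orderStat i).comp measurable_fst
  have hmB : ∀ i : Fin N, Measurable (fun q : (Fin N → ℝ) × (Fin N → ℝ) => orderStat q.2 i) :=
    fun i => (measurable_orderStat i).comp measurable_snd
  have hintA : ∀ i : Fin N,
      Integrable (fun q : (Fin N → ℝ) × (Fin N → ℝ) => (orderStat q.1 i)^2) (unifPair N) := by
    intro i
    refine Integrable.mono' (integrable_const 1)
      (((hmA i).pow_const 2).aestronglyMeasurable) ?_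
    filter_upwards [pair_ae_fst N] with q hq
    obtain ⟨h0, h1⟩ := orderStat_mem_of_box hq i
    rw [Real.norm_eq_abs, abs_of_nonneg (by positivity)]
    nlinarith
  have hintB : ∀ i : Fin N,
      Integrable (fun q : (Fin N → ℝ) × (Fin N → ℝ) => (orderStat q.2 i)^2) (unifPair N) := by
    intro i
    refine Integrable.mono' (integrable_const 1)
      (((hmB i).pow_const 2).aestronglyMeasurable) ?_
    filter_upwards [pair_ae_snd N] with q hq
    obtain ⟨h0, h1⟩ := orderStat_mem_of_box hq i
    rw [Real.norm_eq_abs, abs_of_nonneg (by positivity)]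
    nlinarith
  have hintC : ∀ i j : Fin N,
      Integrable (fun q : (Fin N → ℝ) × (Fin N → ℝ) =>
        orderStat q.1 i * orderStat q.2 j) (unifPair N) := by
    intro i j
    refine Integrable.mono' (integrable_const 1)
      (((hmA i).mul (hmB j)).aestronglyMeasurable) ?_
    filter_upwards [pair_ae_fst N, pair_ae_snd N] with q hq1 hq2
    obtain ⟨ha0, ha1⟩ := orderStat_mem_of_box hq1 i
    obtain ⟨hb0, hb1⟩ := orderStat_mem_of_box hq2 j
    rw [Real.norm_eq_abs, abs_of_nonneg (by positivity)]
    nlinarith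
  have hintT : ∀ i : Fin N,
      Integrable (fun q : (Fin N → ℝ) × (Fin N → ℝ) =>
        (orderStat q.1 i - orderStat q.2 (μ i))^2) (unifPair N) := by
    intro i
    have heq : (fun q : (Fin N → ℝ) × (Fin N → ℝ) =>
        (orderStat q.1 i - orderStat q.2 (μ i))^2)
        = (fun q => (orderStat q.1 i)^2 + (orderStat q.2 (μ i))^2
            - 2 * (orderStat q.1 i * orderStat q.2 (μ i))) := by
      funext q; ring
    rw [heq]
    exact ((hintA i).add (hintB (μ i))).sub ((hintC i (μ i)).const_mul 2)
  have hterm : ∀ i : Fin N,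
      ∫ q, (orderStat q.1 i - orderStat q.2 (μ i))^2 ∂(unifPair N)
        = (∫ x, (orderStat x i)^2 ∂(unifCube N))
          + (∫ x, (orderStat x (μ i))^2 ∂(unifCube N))
          - 2 * ((((i : Fin N):ℝ)+1)/((N:ℝ)+1) * ((((μ i : Fin N):ℝ)+1)/((N:ℝ)+1))) := by
    intro i
    have heq : (fun q : (Fin N → ℝ) × (Fin N → ℝ) =>
        (orderStat q.1 i - orderStat q.2 (μ i))^2)
        = (fun q => (orderStat q.1 i)^2 + (orderStat q.2 (μ i))^2
            - 2 * (orderStat q.1 i * orderStat q.2 (μ i))) := by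
      funext q; ring
    have hAB : Integrable (fun q : (Fin N → ℝ) × (Fin N → ℝ) =>
        (orderStat q.1 i)^2 + (orderStat q.2 (μ i))^2) (unifPair N) :=
      (hintA i).add (hintB (μ i))
    have hC2 : Integrable (fun q : (Fin N → ℝ) × (Fin N → ℝ) =>
        2 * (orderStat q.1 i * orderStat q.2 (μ i))) (unifPair N) :=
      (hintC i (μ i)).const_mul 2
    rw [heq, MeasureTheory.integral_sub hAB hC2,
      MeasureTheory.integral_add (hintA i) (hintB (μ i)),
      MeasureTheory.integral_const_mul 2]
    have hA : ∫ q, (orderStat q.1 i)^2 ∂(unifPair N)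
        = ∫ x, (orderStat x i)^2 ∂(unifCube N) := by
      rw [unifPair_eq]
      rw [MeasureTheory.integral_fun_fst (f := fun x => (orderStat x i)^2)]
      simp [measure_univ]
    have hB : ∫ q, (orderStat q.2 (μ i))^2 ∂(unifPair N)
        = ∫ x, (orderStat x (μ i))^2 ∂(unifCube N) := by
      rw [unifPair_eq]
      rw [MeasureTheory.integral_fun_snd (f := fun x => (orderStat x (μ i))^2)]
      simp [measure_univ]
    have hC : ∫ q, orderStat q.1 i * orderStat q.2 (μ i) ∂(unifPair N)
        = ((((i : Fin N):ℝ)+1)/((N:ℝ)+1)) * ((((μ i : Fin N):ℝ)+1)/((N:ℝ)+1)) := by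
      rw [unifPair_eq, MeasureTheory.integral_prod_mul (f := fun x => orderStat x i)
        (g := fun y => orderStat y (μ i)), moment1, moment1]
    rw [hA, hB, hC]
  have hexp : ∫ q, matchingCostSq N μ q ∂(unifPair N)
      = ∑ i : Fin N, ∫ q, (orderStat q.1 i - orderStat q.2 (μ i))^2 ∂(unifPair N) := by
    unfold matchingCostSq
    rw [MeasureTheory.integral_finset_sum Finset.univ (fun i _ => hintT i)]
  rw [hexp, Finset.sum_congr rfl (fun i _ => hterm i)]
  rw [Finset.sum_sub_distrib, Finset.sum_add_distrib]
  rw [sq_sum N, Equiv.sum_comp μ (fun j => ∫ x, (orderStat x j)^2 ∂(unifCube N)), sq_sum N]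
  rw [← Finset.mul_sum]
  have hfac : ∑ i : Fin N, (((i : Fin N):ℝ)+1)/((N:ℝ)+1) * ((((μ i : Fin N):ℝ)+1)/((N:ℝ)+1))
      = (1/((N:ℝ)+1)^2) * ∑ i : Fin N, ((i:ℝ)+1)*(((μ i : Fin N) : ℝ)+1) := by
    rw [Finset.mul_sum]
    refine Finset.sum_congr rfl fun i _ => ?_
    field_simp
  rw [hfac]
  ring

/-- **Average costs of the two criss-cross matchings.**  Decompose the criss-cross
cycle into the matchings `μ̃₁ = π̃∘σ̃⁻¹` and `μ̃₂ = π̃∘τ⁻¹∘σ̃⁻¹` (`τ = finRotate N`).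
For points uniform on `[0,1]`: if `N` is odd then both matchings have average cost
`(N² + 4N − 3)/(3(N+1)²)`; if `N` is even then the matching with two fixed points,
`μ̃₂`, has average cost `(N² + 4N − 6)/(3(N+1)²)` while the matching with no fixed
points, `μ̃₁`, has average cost `(N² + 4N)/(3(N+1)²)`. -/
theorem average_crisscross_matching_costs (N : ℕ) (hN : 1 ≤ N) :
    (Odd N →
      (∫ q, matchingCostSq N (piTilde N * (sigmaTilde N)⁻¹) q ∂(unifPair N)
          = ((N : ℝ) ^ 2 + 4 * N - 3) / (3 * ((N : ℝ) + 1) ^ 2)) ∧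
      (∫ q, matchingCostSq N (piTilde N * (finRotate N)⁻¹ * (sigmaTilde N)⁻¹) q ∂(unifPair N)
          = ((N : ℝ) ^ 2 + 4 * N - 3) / (3 * ((N : ℝ) + 1) ^ 2))) ∧
    (Even N →
      (∫ q, matchingCostSq N (piTilde N * (finRotate N)⁻¹ * (sigmaTilde N)⁻¹) q ∂(unifPair N)
          = ((N : ℝ) ^ 2 + 4 * N - 6) / (3 * ((N : ℝ) + 1) ^ 2)) ∧
      (∫ q, matchingCostSq N (piTilde N * (sigmaTilde N)⁻¹) q ∂(unifPair N)
          = ((N : ℝ) ^ 2 + 4 * N) / (3 * ((N : ℝ) + 1) ^ 2))) := by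
  have hN1 : ((N:ℝ)+1) ≠ 0 := by positivity
  constructor
  · intro hodd
    obtain ⟨m, hm⟩ := hodd
    constructor
    · rw [cost_formula, TsumEq1, T1_odd N m (by omega)]
      field_simp
      ring
    · rcases Nat.eq_zero_or_pos m with hm0 | hmpos
      · subst hm0
        have hNone : N = 1 := by omega
        subst hNone
        rw [cost_formula, TsumEq2]
        norm_num [sfun]
      · obtain ⟨m', rfl⟩ : ∃ m', m = m' + 1 := ⟨m - 1, by omega⟩
        rw [cost_formula, TsumEq2, T2_odd N m' (by omega)]
        field_simp
        ring
  · intro heven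
    obtain ⟨r, hr⟩ := heven
    have hrpos : 1 ≤ r := by omega
    obtain ⟨m, rfl⟩ : ∃ m, r = m + 1 := ⟨r - 1, by omega⟩
    constructor
    · rw [cost_formula, TsumEq2, T2_even N m (by omega)]
      field_simp
      ring
    · rw [cost_formula, TsumEq1, T1_even N (m+1) (by omega)]
      field_simp
      ring
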